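/- arXiv:2107.11590 — 4 statements merged into one kernel-verified Lean document; each statement's English description precedes it below -/
import Mathlib

section
/- Let n ≥ 2 and α ∈ (n-1, n). Then there is a constant C such that g_α(R) = (1/|S^{n-1}|) ∫_{S^{n-1}} |e_1 - R ω|^{-α} dσ(ω) ≤ C (1-R)^{-α+n-1} for all R ∈ [0,1). -/
open MeasureTheory Real Metric Set
open scoped Pointwise

theorem cap_bound {n : ℕ} (hn : 2 ≤ n) :
    ∃ c : ℝ, 0 ≤ c ∧ ∀ s : ℝ, 0 ≤ s →
      (volume : Measure (EuclideanSpace ℝ (Fin n))).toSphere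
          {ω : sphere (0 : EuclideanSpace ℝ (Fin n)) 1 |
            1 - (ω : EuclideanSpace ℝ (Fin n)) ⟨0, Nat.zero_lt_two.trans_le hn⟩ ≤ s}
        ≤ ENNReal.ofReal (c * s ^ (((n : ℝ) - 1) / 2)) := by
  set i0 : Fin n := ⟨0, Nat.zero_lt_two.trans_le hn⟩
  refine ⟨(n : ℝ) * 2 * 2 ^ (n - 1) * 2 ^ (((n : ℝ) - 1) / 2), by positivity, fun s hs => ?_⟩
  set A : Set (sphere (0 : EuclideanSpace ℝ (Fin n)) 1) :=
    {ω | 1 - (ω : EuclideanSpace ℝ (Fin n)) i0 ≤ s} with hA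
  have hAm : MeasurableSet A := by
    have hc : Continuous fun ω : sphere (0 : EuclideanSpace ℝ (Fin n)) 1 =>
        (ω : EuclideanSpace ℝ (Fin n)) i0 :=
      (EuclideanSpace.proj i0).continuous.comp continuous_subtype_val
    exact measurableSet_le ((hc.measurable.const_sub 1)) measurable_const
  rw [Measure.toSphere_apply' _ hAm]
  set b : Fin n → ℝ := fun j => if j = i0 then 1 else Real.sqrt (2 * s) with hb
  have hbnn : ∀ j, 0 ≤ b j := by
    intro j; by_cases h : j = i0 <;> simp [hb, h, Real.sqrt_nonneg]
  set B : Set (EuclideanSpace ℝ (Fin n)) :=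
    (MeasurableEquiv.toLp 2 (Fin n → ℝ)).symm ⁻¹' (univ.pi fun j => Icc (-(b j)) (b j)) with hBdef
  have hsub : Ioo (0 : ℝ) 1 • (Subtype.val '' A) ⊆ B := by
    rintro x hx
    rw [Set.mem_smul] at hx
    obtain ⟨r, hr, y, ⟨ω, hω, rfl⟩, rfl⟩ := hx
    have hωn : ‖(ω : EuclideanSpace ℝ (Fin n))‖ = 1 := by
      have := ω.2
      rwa [mem_sphere_zero_iff_norm] at this
    have hsum : ∑ j, ((ω : EuclideanSpace ℝ (Fin n)) j) ^ 2 = 1 := by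
      have h2 := EuclideanSpace.norm_eq (ω : EuclideanSpace ℝ (Fin n))
      rw [hωn] at h2
      have h4 : (∑ j, ‖(ω : EuclideanSpace ℝ (Fin n)) j‖ ^ 2) = 1 :=
        Real.sqrt_eq_one.mp h2.symm
      simpa [Real.norm_eq_abs, sq_abs] using h4
    intro j _
    have hr0 : 0 < r := hr.1
    have hr1 : r < 1 := hr.2
    show (r • (ω : EuclideanSpace ℝ (Fin n))) j ∈ Icc (-(b j)) (b j)
    have hcoord : (r • (ω : EuclideanSpace ℝ (Fin n))) j
        = r * (ω : EuclideanSpace ℝ (Fin n)) j := rfl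
    have hsq1 : ((ω : EuclideanSpace ℝ (Fin n)) j) ^ 2
        ≤ ∑ i, ((ω : EuclideanSpace ℝ (Fin n)) i) ^ 2 :=
      Finset.single_le_sum (f := fun i => ((ω : EuclideanSpace ℝ (Fin n)) i) ^ 2)
        (fun i _ => sq_nonneg _) (Finset.mem_univ j)
    have hωjb : |(ω : EuclideanSpace ℝ (Fin n)) j| ≤ b j := by
      by_cases hj : j = i0
      · rw [hj]
        simp only [hb, if_pos rfl]
        have : ((ω : EuclideanSpace ℝ (Fin n)) i0) ^ 2 ≤ 1 := by
          have := Finset.single_le_sum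
            (fun i (_ : i ∈ Finset.univ) => sq_nonneg ((ω : EuclideanSpace ℝ (Fin n)) i))
            (Finset.mem_univ i0)
          linarith [hsum]
        nlinarith [sq_abs ((ω : EuclideanSpace ℝ (Fin n)) i0),
          abs_nonneg ((ω : EuclideanSpace ℝ (Fin n)) i0)]
      · simp only [hb, if_neg hj]
        have hcap : 1 - (ω : EuclideanSpace ℝ (Fin n)) i0 ≤ s := hω
        have hpair0 : ∑ x ∈ ({j, i0} : Finset (Fin n)), ((ω : EuclideanSpace ℝ (Fin n)) x) ^ 2
            ≤ ∑ i, ((ω : EuclideanSpace ℝ (Fin n)) i) ^ 2 :=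
          Finset.sum_le_sum_of_subset_of_nonneg (Finset.subset_univ _)
            (fun i _ _ => sq_nonneg _)
        have hpair : ((ω : EuclideanSpace ℝ (Fin n)) j) ^ 2
            + ((ω : EuclideanSpace ℝ (Fin n)) i0) ^ 2
            ≤ ∑ i, ((ω : EuclideanSpace ℝ (Fin n)) i) ^ 2 := by
          rwa [Finset.sum_pair hj] at hpair0
        have hi0sq : ((ω : EuclideanSpace ℝ (Fin n)) i0) ^ 2 ≤ 1 := by
          have := Finset.single_le_sum
            (fun i (_ : i ∈ Finset.univ) => sq_nonneg ((ω : EuclideanSpace ℝ (Fin n)) i))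
            (Finset.mem_univ i0)
          linarith [hsum]
        have hi0le : (ω : EuclideanSpace ℝ (Fin n)) i0 ≤ 1 := by nlinarith
        have hjsq : ((ω : EuclideanSpace ℝ (Fin n)) j) ^ 2 ≤ 2 * s := by nlinarith [hsum]
        rw [← Real.sqrt_sq_eq_abs]
        exact Real.sqrt_le_sqrt hjsq
    rw [hcoord, mem_Icc, ← abs_le, abs_mul, abs_of_pos hr0]
    nlinarith [abs_nonneg ((ω : EuclideanSpace ℝ (Fin n)) j), hbnn j]
  have hBvol : volume B = ENNReal.ofReal (2 * (2 * Real.sqrt (2 * s)) ^ (n - 1)) := by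
    rw [hBdef, (EuclideanSpace.volume_preserving_symm_measurableEquiv_toLp (Fin n)).measure_preimage
      ((MeasurableSet.univ_pi fun j => measurableSet_Icc).nullMeasurableSet)]
    rw [volume_pi_pi]
    have hv : ∀ j, (volume (Icc (-(b j)) (b j)) : ENNReal) = ENNReal.ofReal (2 * b j) := by
      intro j; rw [Real.volume_Icc]; ring_nf
    simp_rw [hv]
    rw [← ENNReal.ofReal_prod_of_nonneg (fun j _ => by positivity)]
    congr 1
    rw [← Finset.mul_prod_erase Finset.univ _ (Finset.mem_univ i0)]
    have h1 : (2 : ℝ) * b i0 = 2 := by simp [hb]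
    have h2 : ∀ j ∈ Finset.univ.erase i0, (2 : ℝ) * b j = 2 * Real.sqrt (2 * s) := by
      intro j hj
      simp [hb, (Finset.mem_erase.mp hj).1]
    rw [h1, Finset.prod_congr rfl h2, Finset.prod_const, Finset.card_erase_of_mem
      (Finset.mem_univ i0), Finset.card_univ, Fintype.card_fin]
  have hcast : ((n - 1 : ℕ) : ℝ) = (n : ℝ) - 1 := by
    rw [Nat.cast_sub (by omega), Nat.cast_one]
  calc (Module.finrank ℝ (EuclideanSpace ℝ (Fin n)) : ENNReal)
        * volume (Ioo (0:ℝ) 1 • (Subtype.val '' A))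
      ≤ (n : ENNReal) * volume B := by
        rw [finrank_euclideanSpace_fin]
        exact mul_le_mul_right (measure_mono hsub) _
    _ ≤ ENNReal.ofReal ((n : ℝ) * 2 * 2 ^ (n - 1) * 2 ^ (((n : ℝ) - 1) / 2)
          * s ^ (((n : ℝ) - 1) / 2)) := by
        rw [hBvol, ← ENNReal.ofReal_natCast n, ← ENNReal.ofReal_mul (by positivity)]
        apply ENNReal.ofReal_le_ofReal
        have hsq : (Real.sqrt (2 * s)) ^ (n - 1) = (2 * s) ^ (((n : ℝ) - 1) / 2) := by
          rw [← Real.rpow_natCast (Real.sqrt (2 * s)) (n - 1), hcast, Real.sqrt_eq_rpow,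
            ← Real.rpow_mul (by positivity)]
          congr 1; ring
        have key : (2 * Real.sqrt (2 * s)) ^ (n - 1)
            = 2 ^ (n - 1) * (2 ^ (((n : ℝ) - 1) / 2) * s ^ (((n : ℝ) - 1) / 2)) := by
          rw [mul_pow, hsq, Real.mul_rpow (by norm_num) hs]
        rw [key]
        exact le_of_eq (by ring)


set_option maxHeartbeats 2000000 in
theorem main_bound {n : ℕ} (hn : 2 ≤ n) (α : ℝ) (hα0 : (n : ℝ) - 1 < α) (hαn : α < n)
    (hcapall : ∃ c : ℝ, 0 ≤ c ∧ ∀ s : ℝ, 0 ≤ s →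
      (volume : Measure (EuclideanSpace ℝ (Fin n))).toSphere
          {ω : sphere (0 : EuclideanSpace ℝ (Fin n)) 1 |
            1 - (ω : EuclideanSpace ℝ (Fin n)) ⟨0, Nat.zero_lt_two.trans_le hn⟩ ≤ s}
        ≤ ENNReal.ofReal (c * s ^ (((n : ℝ) - 1) / 2))) :
    ∃ C : ℝ, 0 ≤ C ∧ ∀ R ∈ Set.Ico (0 : ℝ) 1,
      (∫ ω : sphere (0 : EuclideanSpace ℝ (Fin n)) 1,
          ‖(EuclideanSpace.single (⟨0, Nat.zero_lt_two.trans_le hn⟩ : Fin n) (1 : ℝ)) -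
              R • (ω : EuclideanSpace ℝ (Fin n))‖ ^ (-α)
          ∂((volume : Measure (EuclideanSpace ℝ (Fin n))).toSphere))
        ≤ C * (1 - R) ^ (-α + (n : ℝ) - 1) := by
  obtain ⟨c, hc0, hcap⟩ := hcapall
  set i0 : Fin n := ⟨0, Nat.zero_lt_two.trans_le hn⟩
  set E := EuclideanSpace ℝ (Fin n)
  set e1 : E := EuclideanSpace.single i0 (1 : ℝ) with he1
  set σ : Measure (sphere (0 : E) 1) := (volume : Measure E).toSphere with hσ
  set s0 : ℝ := (σ Set.univ).toReal with hs0
  have hs0nn : 0 ≤ s0 := ENNReal.toReal_nonneg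
  have hn1 : (1 : ℝ) ≤ (n : ℝ) - 1 := by
    have : (2 : ℝ) ≤ (n : ℝ) := by exact_mod_cast hn
    linarith
  have hαpos : 0 < α := by linarith
  set β : ℝ := ((n : ℝ) - 1) / α with hβ
  have hβ0 : 0 < β := by rw [hβ]; positivity
  have hβ1 : β < 1 := (div_lt_one hαpos).mpr hα0
  have h1β : 0 < 1 - β := by linarith
  set c' : ℝ := c * 4 ^ (((n : ℝ) - 1) / 2) with hc'
  have hc'0 : 0 ≤ c' := by rw [hc']; positivity
  set K : ℝ := s0 + c' / (1 - β) with hK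
  have hK0 : 0 ≤ K := by rw [hK]; positivity
  refine ⟨K, hK0, ?_⟩
  rintro R ⟨hR0, hR1⟩
  set δ : ℝ := 1 - R with hδ
  have hδ0 : 0 < δ := by rw [hδ]; linarith
  have hδ1 : δ ≤ 1 := by rw [hδ]; linarith
  set e : ℝ := -α + (n : ℝ) - 1 with he
  have hee : e ≤ 0 := by rw [he]; linarith
  have hde : 1 ≤ δ ^ e := Real.one_le_rpow_of_pos_of_le_one_of_nonpos hδ0 hδ1 hee
  have hde0 : 0 ≤ δ ^ e := by linarith
  -- pointwise norm facts
  have hωn : ∀ ω : sphere (0 : E) 1, ‖(ω : E)‖ = 1 := fun ω =>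
    mem_sphere_zero_iff_norm.mp ω.2
  have habs : ∀ ω : sphere (0 : E) 1, |(ω : E) i0| ≤ 1 := by
    intro ω
    have h := abs_real_inner_le_norm e1 (ω : E)
    rw [he1, EuclideanSpace.inner_single_left, EuclideanSpace.norm_single, hωn ω] at h
    simpa using h
  have hnormsq : ∀ ω : sphere (0 : E) 1,
      ‖e1 - R • (ω : E)‖ ^ 2 = 1 - 2 * R * ((ω : E) i0) + R ^ 2 := by
    intro ω
    have h := norm_sub_sq_real e1 (R • (ω : E))
    have hinner : (inner ℝ e1 (R • (ω : E)) : ℝ) = R * (ω : E) i0 := by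
      rw [real_inner_smul_right, he1, EuclideanSpace.inner_single_left]
      simp
    have hns : ‖R • (ω : E)‖ ^ 2 = R ^ 2 := by
      rw [norm_smul, hωn ω, Real.norm_eq_abs, mul_one, sq_abs]
    rw [h, hinner, hns, he1, EuclideanSpace.norm_single]
    norm_num [mul_assoc]
  have hquarter : ∀ ω : sphere (0 : E) 1,
      δ ^ 2 + (1 - (ω : E) i0) ≤ 4 * ‖e1 - R • (ω : E)‖ ^ 2 := by
    intro ω
    have h1 := hnormsq ω
    have h2 := abs_le.mp (habs ω)
    rw [h1, hδ]
    by_cases hR8 : (1 : ℝ) / 8 ≤ R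
    · nlinarith [sq_nonneg (1 - R), mul_nonneg (by linarith : (0:ℝ) ≤ 1 - (ω : E) i0)
        (by linarith : (0:ℝ) ≤ 8 * R - 1)]
    · push_neg at hR8
      nlinarith [sq_nonneg (1 - R), mul_nonneg (by linarith : (0:ℝ) ≤ 1 - (ω : E) i0)
        (by linarith : (0:ℝ) ≤ 1 - 8 * R),
        mul_le_mul (by linarith : 1 - (ω : E) i0 ≤ 2) (by linarith : 1 - 8 * R ≤ 1)
          (by linarith) (by norm_num : (0:ℝ) ≤ 2)]
  have htri : ∀ ω : sphere (0 : E) 1, δ ≤ ‖e1 - R • (ω : E)‖ := by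
    intro ω
    have h := norm_sub_norm_le e1 (R • (ω : E))
    have h2 : ‖R • (ω : E)‖ = R := by
      rw [norm_smul, hωn ω, Real.norm_eq_abs, abs_of_nonneg hR0, mul_one]
    have h3 : ‖e1‖ = 1 := by rw [he1, EuclideanSpace.norm_single, norm_one]
    rw [h2, h3] at h
    linarith
  have hnormpos : ∀ ω : sphere (0 : E) 1, 0 < ‖e1 - R • (ω : E)‖ := fun ω =>
    lt_of_lt_of_le hδ0 (htri ω)
  set F : sphere (0 : E) 1 → ℝ := fun ω => ‖e1 - R • (ω : E)‖ ^ (-α) with hF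
  have hFnn : ∀ ω, 0 ≤ F ω := fun ω => Real.rpow_nonneg (norm_nonneg _) _
  have hFcont : Continuous F := by
    have hbase : Continuous fun ω : sphere (0:E) 1 => ‖e1 - R • (ω : E)‖ :=
      (continuous_const.sub (continuous_subtype_val.const_smul R)).norm
    exact Continuous.rpow hbase continuous_const fun ω => Or.inl (ne_of_gt (hnormpos ω))
  -- measure of superlevel sets
  have hlevel : ∀ t : ℝ, 0 < t → σ {ω | t ≤ F ω} ≤ ENNReal.ofReal (c' * t ^ (-β)) := by
    intro t ht
    refine le_trans (measure_mono ?_) (le_trans (hcap (4 * t ^ (-(2 / α))) (by positivity)) ?_)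
    · intro ω hω
      have hωF : t ≤ F ω := hω
      show 1 - (ω : E) i0 ≤ 4 * t ^ (-(2 / α))
      have hmon : (F ω) ^ (-(2 / α)) ≤ t ^ (-(2 / α)) :=
        Real.rpow_le_rpow_of_nonpos ht hωF (neg_nonpos.mpr (by positivity))
      have hval : (F ω) ^ (-(2 / α)) = ‖e1 - R • (ω : E)‖ ^ 2 := by
        show ((‖e1 - R • (ω : E)‖ ^ (-α)) ^ (-(2 / α)) : ℝ) = _
        rw [← Real.rpow_natCast ‖e1 - R • (ω : E)‖ 2, ← Real.rpow_mul (norm_nonneg _)]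
        congr 1
        push_cast
        field_simp
      have := hquarter ω
      rw [hval] at hmon
      nlinarith [sq_nonneg δ]
    · apply le_of_eq
      congr 1
      rw [hc', Real.mul_rpow (by norm_num) (Real.rpow_nonneg ht.le _),
        ← Real.rpow_mul ht.le]
      have hexp : -(2 / α) * (((n : ℝ) - 1) / 2) = -β := by
        rw [hβ]; field_simp
      rw [hexp]; ring
  set T : ℝ := δ ^ (-α) with hT
  have hT1 : (1 : ℝ) ≤ T :=
    Real.one_le_rpow_of_pos_of_le_one_of_nonpos hδ0 hδ1 (by linarith)
  have hTempty : ∀ t : ℝ, T < t → σ {ω | t ≤ F ω} = 0 := by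
    intro t ht
    have : {ω : sphere (0 : E) 1 | t ≤ F ω} = ∅ := by
      rw [Set.eq_empty_iff_forall_notMem]
      intro ω hω
      have h1 : F ω ≤ T :=
        Real.rpow_le_rpow_of_nonpos hδ0 (htri ω) (by linarith)
      have : t ≤ F ω := hω
      linarith
    rw [this]
    exact measure_empty
  -- layer cake
  have hlc : ∫⁻ ω, ENNReal.ofReal (F ω) ∂σ = ∫⁻ t in Ioi (0:ℝ), σ {ω | t ≤ F ω} :=
    lintegral_eq_lintegral_meas_le σ (ae_of_all _ hFnn) hFcont.measurable.aemeasurable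
  set ind1 : ℝ → ENNReal := (Set.Ioc (0:ℝ) 1).indicator (fun _ => σ Set.univ) with hind1
  set ind2 : ℝ → ENNReal :=
    (Set.Ioc (1:ℝ) T).indicator (fun t => ENNReal.ofReal (c' * t ^ (-β))) with hind2
  have hG : ∀ t ∈ Ioi (0:ℝ), σ {ω | t ≤ F ω} ≤ ind1 t + ind2 t := by
    intro t ht
    rw [mem_Ioi] at ht
    by_cases ht1 : t ≤ 1
    · have : ind1 t = σ Set.univ := Set.indicator_of_mem (Set.mem_Ioc.mpr ⟨ht, ht1⟩) _
      rw [this]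
      exact le_add_right (measure_mono (subset_univ _))
    · push_neg at ht1
      by_cases htT : t ≤ T
      · have : ind2 t = ENNReal.ofReal (c' * t ^ (-β)) := Set.indicator_of_mem (Set.mem_Ioc.mpr ⟨ht1, htT⟩) _
        rw [this]
        exact le_add_left (hlevel t ht)
      · push_neg at htT
        rw [hTempty t htT]
        exact zero_le
  have hi1 : ∫⁻ t in Ioi (0:ℝ), ind1 t ≤ ENNReal.ofReal (s0 * δ ^ e) := by
    refine le_trans (setLIntegral_le_lintegral _ _) ?_
    rw [hind1, lintegral_indicator_const measurableSet_Ioc, Real.volume_Ioc]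
    simp only [sub_zero, ENNReal.ofReal_one, mul_one]
    rw [← ENNReal.ofReal_toReal (measure_ne_top σ Set.univ)]
    apply ENNReal.ofReal_le_ofReal
    have hh : (σ Set.univ).toReal = s0 := rfl
    rw [hh]
    nlinarith [mul_nonneg hs0nn (sub_nonneg.mpr hde)]
  have hi2 : ∫⁻ t in Ioi (0:ℝ), ind2 t ≤ ENNReal.ofReal ((c' / (1 - β)) * δ ^ e) := by
    refine le_trans (setLIntegral_le_lintegral _ _) ?_
    rw [hind2, lintegral_indicator measurableSet_Ioc]
    have hInt : IntegrableOn (fun t : ℝ => c' * t ^ (-β)) (Ioc 1 T) volume := by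
      have := (intervalIntegral.intervalIntegrable_rpow' (a := 1) (b := T)
        (by linarith : (-1:ℝ) < -β)).const_mul c'
      rwa [intervalIntegrable_iff_integrableOn_Ioc_of_le hT1] at this
    have hnnae : 0 ≤ᵐ[volume.restrict (Ioc (1:ℝ) T)] fun t : ℝ => c' * t ^ (-β) := by
      filter_upwards [ae_restrict_mem measurableSet_Ioc] with t ht
      have : (0:ℝ) < t := lt_trans zero_lt_one ht.1
      positivity
    rw [← ofReal_integral_eq_lintegral_ofReal hInt hnnae]
    apply ENNReal.ofReal_le_ofReal
    rw [← intervalIntegral.integral_of_le hT1, intervalIntegral.integral_const_mul,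
      integral_rpow (Or.inl (by linarith : (-1:ℝ) < -β))]
    have hTe : T ^ (-β + 1) = δ ^ e := by
      rw [hT, ← Real.rpow_mul hδ0.le]
      congr 1
      rw [he, hβ]
      field_simp
      ring
    rw [Real.one_rpow, hTe]
    calc c' * ((δ ^ e - 1) / (-β + 1)) ≤ c' * (δ ^ e / (1 - β)) := by
          rw [show (-β + 1 : ℝ) = 1 - β by ring]
          gcongr
          linarith
      _ = c' / (1 - β) * δ ^ e := by ring
  have htot : ∫⁻ ω, ENNReal.ofReal (F ω) ∂σ ≤ ENNReal.ofReal (K * δ ^ e) := by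
    rw [hlc]
    calc ∫⁻ t in Ioi (0:ℝ), σ {ω | t ≤ F ω}
        ≤ ∫⁻ t in Ioi (0:ℝ), (ind1 t + ind2 t) :=
          lintegral_mono_ae ((ae_restrict_iff' measurableSet_Ioi).mpr (ae_of_all _ hG))
      _ = (∫⁻ t in Ioi (0:ℝ), ind1 t) + ∫⁻ t in Ioi (0:ℝ), ind2 t := by
          apply lintegral_add_left
          exact measurable_const.indicator measurableSet_Ioc
      _ ≤ ENNReal.ofReal (s0 * δ ^ e) + ENNReal.ofReal ((c' / (1 - β)) * δ ^ e) :=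
          add_le_add hi1 hi2
      _ = ENNReal.ofReal (K * δ ^ e) := by
          rw [← ENNReal.ofReal_add (by positivity) (by positivity)]
          congr 1
          rw [hK]; ring
  have hintF : ∫ ω, F ω ∂σ ≤ K * δ ^ e := by
    rw [integral_eq_lintegral_of_nonneg_ae (ae_of_all _ hFnn) hFcont.aestronglyMeasurable]
    exact ENNReal.toReal_le_of_le_ofReal (by positivity) htot
  exact hintF


theorem stmt_6 {n : ℕ} (hn : 2 ≤ n) (α : ℝ) (hα0 : (n : ℝ) - 1 < α) (hαn : α < n)
    (g : ℝ → ℝ)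
    (hg : ∀ R : ℝ, g R =
      (1 / ((volume : Measure (EuclideanSpace ℝ (Fin n))).toSphere Set.univ).toReal) *
        ∫ ω : sphere (0 : EuclideanSpace ℝ (Fin n)) 1,
          ‖(EuclideanSpace.single (⟨0, by omega⟩ : Fin n) (1 : ℝ)) -
              R • (ω : EuclideanSpace ℝ (Fin n))‖ ^ (-α)
          ∂((volume : Measure (EuclideanSpace ℝ (Fin n))).toSphere)) :
    ∃ C : ℝ, ∀ R ∈ Set.Ico (0 : ℝ) 1, g R ≤ C * (1 - R) ^ (-α + (n : ℝ) - 1) := by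
  obtain ⟨C, hC0, hC⟩ := main_bound hn α hα0 hαn (cap_bound hn)
  refine ⟨(1 / ((volume : Measure (EuclideanSpace ℝ (Fin n))).toSphere Set.univ).toReal) * C,
    fun R hR => ?_⟩
  rw [hg R]
  have h2 : 0 ≤ 1 / ((volume : Measure (EuclideanSpace ℝ (Fin n))).toSphere Set.univ).toReal := by
    positivity
  calc (1 / ((volume : Measure (EuclideanSpace ℝ (Fin n))).toSphere Set.univ).toReal) *
        ∫ ω : sphere (0 : EuclideanSpace ℝ (Fin n)) 1,
          ‖(EuclideanSpace.single (⟨0, by omega⟩ : Fin n) (1 : ℝ)) -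
              R • (ω : EuclideanSpace ℝ (Fin n))‖ ^ (-α)
          ∂((volume : Measure (EuclideanSpace ℝ (Fin n))).toSphere)
      ≤ (1 / ((volume : Measure (EuclideanSpace ℝ (Fin n))).toSphere Set.univ).toReal) *
        (C * (1 - R) ^ (-α + (n : ℝ) - 1)) := mul_le_mul_of_nonneg_left (hC R hR) h2
    _ = _ := by ring
end

section
/- For s ∈ (0, n) and R > 0, the function u_R := K_{n,s} I_{n-s} * f_R with f_R(y) = (|S^{n-1}| ln R)^{-s/n} 1_{B_R \ B_1}(y) |y|^{-s} satisfies: f_R has L^{n/s}(ℝ^n) norm equal to 1, and there is a constant c > 0 independent of R such that u_R(x) ≥ c (ln R)^{(n-s)/n} for every x ∈ B_1 and R ≥ 2. -/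
open MeasureTheory Real
open scoped ENNReal NNReal

theorem aux_key {n : ℕ} (hn : 1 ≤ n) {R : ℝ} (hR : 1 ≤ R) :
    ∫ y : EuclideanSpace ℝ (Fin n),
      Set.indicator {z : EuclideanSpace ℝ (Fin n) | 1 ≤ ‖z‖ ∧ ‖z‖ < R}
        (fun z => ‖z‖ ^ (-(n : ℝ))) y
      = ((volume : Measure (EuclideanSpace ℝ (Fin n))).toSphere Set.univ).toReal * Real.log R := by
  haveI : Nontrivial (EuclideanSpace ℝ (Fin n)) :=
    Module.nontrivial_of_finrank_pos (R := ℝ) (by rw [finrank_euclideanSpace_fin]; omega)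
  have hcomp : ∀ y : EuclideanSpace ℝ (Fin n),
      Set.indicator {z : EuclideanSpace ℝ (Fin n) | 1 ≤ ‖z‖ ∧ ‖z‖ < R}
        (fun z => ‖z‖ ^ (-(n : ℝ))) y
      = Set.indicator (Set.Ico 1 R) (fun r : ℝ => r ^ (-(n : ℝ))) ‖y‖ := by
    intro y
    simp only [Set.indicator_apply, Set.mem_setOf_eq, Set.mem_Ico]
  simp only [hcomp]
  rw [integral_fun_norm_addHaar (volume : Measure (EuclideanSpace ℝ (Fin n)))
      (fun r : ℝ => Set.indicator (Set.Ico 1 R) (fun r : ℝ => r ^ (-(n : ℝ))) r),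
    Measure.toSphere_apply_univ, finrank_euclideanSpace_fin]
  have hinner : ∫ r in Set.Ioi (0 : ℝ),
      r ^ (n - 1) • Set.indicator (Set.Ico 1 R) (fun r : ℝ => r ^ (-(n : ℝ))) r
      = Real.log R := by
    have h1 : ∀ r ∈ Set.Ioi (0 : ℝ),
        r ^ (n - 1) • Set.indicator (Set.Ico 1 R) (fun r : ℝ => r ^ (-(n : ℝ))) r
        = Set.indicator (Set.Ico 1 R) (fun r : ℝ => r⁻¹) r := by
      intro r hr
      have hr0 : (0 : ℝ) < r := hr
      by_cases h : r ∈ Set.Ico (1 : ℝ) R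
      · rw [Set.indicator_of_mem h, Set.indicator_of_mem h, smul_eq_mul,
          ← Real.rpow_natCast r (n - 1), ← Real.rpow_add hr0]
        have hcast : ((n - 1 : ℕ) : ℝ) + (-(n : ℝ)) = -1 := by
          rw [Nat.cast_sub hn]; push_cast; ring
        rw [hcast, Real.rpow_neg_one]
      · rw [Set.indicator_of_notMem h, Set.indicator_of_notMem h, smul_zero]
    have hIcoIoi : Set.Ico (1 : ℝ) R ∩ Set.Ioi 0 = Set.Ico 1 R :=
      Set.inter_eq_left.2 fun r hr => lt_of_lt_of_le one_pos hr.1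
    have hIcoIoc : (volume : Measure ℝ).restrict (Set.Ico 1 R) = volume.restrict (Set.Ioc 1 R) :=
      Measure.restrict_congr_set Ico_ae_eq_Ioc
    open intervalIntegral in
    rw [setIntegral_congr_fun measurableSet_Ioi h1,
      MeasureTheory.integral_indicator measurableSet_Ico,
      Measure.restrict_restrict measurableSet_Ico,
      hIcoIoi, hIcoIoc,
      ← integral_of_le hR,
      integral_inv (Set.notMem_uIcc_of_lt one_pos (lt_of_lt_of_le one_pos hR)),
      div_one]
  rw [hinner, ENNReal.toReal_mul, ENNReal.toReal_natCast]
  simp only [nsmul_eq_mul, smul_eq_mul, measureReal_def]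
  ring

theorem aux_integrable {n : ℕ} {R : ℝ} (hR : 0 < R) (w : EuclideanSpace ℝ (Fin n) → ℝ)
    (hw : ContinuousOn w {z : EuclideanSpace ℝ (Fin n) | 1 ≤ ‖z‖ ∧ ‖z‖ < R})
    {M : ℝ} (hM : ∀ z, 1 ≤ ‖z‖ → ‖z‖ < R → ‖w z‖ ≤ M) :
    Integrable (Set.indicator {z : EuclideanSpace ℝ (Fin n) | 1 ≤ ‖z‖ ∧ ‖z‖ < R} w) := by
  have hA : MeasurableSet {z : EuclideanSpace ℝ (Fin n) | 1 ≤ ‖z‖ ∧ ‖z‖ < R} := by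
    have : {z : EuclideanSpace ℝ (Fin n) | 1 ≤ ‖z‖ ∧ ‖z‖ < R}
        = (fun z : EuclideanSpace ℝ (Fin n) => ‖z‖) ⁻¹' Set.Ico 1 R := rfl
    rw [this]
    exact measurable_norm measurableSet_Ico
  rw [integrable_indicator_iff hA]
  refine ⟨hw.aestronglyMeasurable hA, ?_⟩
  apply HasFiniteIntegral.restrict_of_bounded (C := M)
  · refine lt_of_le_of_lt (measure_mono ?_)
      (measure_ball_lt_top (x := (0 : EuclideanSpace ℝ (Fin n))) (r := R))
    intro z hz
    simpa [Metric.mem_ball, dist_zero_right] using hz.2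
  · filter_upwards [ae_restrict_mem hA] with z hz
    exact hM z hz.1 hz.2

theorem stmt_9 {n : ℕ} (hn : 1 ≤ n) (s : ℝ) (hs0 : 0 < s) (hsn : s < n)
    (K : ℝ) (hK : 0 < K)
    (Sn1 : ℝ)
    (hSn1 : Sn1 = ((volume : Measure (EuclideanSpace ℝ (Fin n))).toSphere Set.univ).toReal)
    (f : ℝ → EuclideanSpace ℝ (Fin n) → ℝ)
    (hf : ∀ R y, f R y =
      (Sn1 * Real.log R) ^ (-(s / n)) *
        Set.indicator {z : EuclideanSpace ℝ (Fin n) | 1 ≤ ‖z‖ ∧ ‖z‖ < R}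
          (fun z => ‖z‖ ^ (-s)) y)
    (u : ℝ → EuclideanSpace ℝ (Fin n) → ℝ)
    (hu : ∀ R x, u R x = K * ∫ y, ‖x - y‖ ^ (-(n : ℝ) + s) * f R y) :
    (∀ R : ℝ, 2 ≤ R →
      eLpNorm (f R) (ENNReal.ofReal ((n : ℝ) / s)) volume = 1) ∧
    (∃ c > 0, ∀ R : ℝ, 2 ≤ R → ∀ x : EuclideanSpace ℝ (Fin n), ‖x‖ < 1 →
      c * Real.log R ^ (((n : ℝ) - s) / n) ≤ u R x) := by
  have hn0 : (0 : ℝ) < n := by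
    have : (0 : ℕ) < n := hn
    exact_mod_cast this
  have hSpos : 0 < Sn1 := by
    rw [hSn1, Measure.toSphere_apply_univ, finrank_euclideanSpace_fin, ENNReal.toReal_mul,
      ENNReal.toReal_natCast]
    exact mul_pos hn0 (ENNReal.toReal_pos
      (Metric.measure_ball_pos volume 0 one_pos).ne' measure_ball_lt_top.ne)
  have hns : (0 : ℝ) < (n : ℝ) / s := div_pos hn0 hs0
  have hwcont0 : ∀ R : ℝ, ContinuousOn (fun z : EuclideanSpace ℝ (Fin n) => ‖z‖ ^ (-(n : ℝ)))
      {z : EuclideanSpace ℝ (Fin n) | 1 ≤ ‖z‖ ∧ ‖z‖ < R} := by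
    intro R
    exact ContinuousOn.rpow_const continuous_norm.continuousOn
      (fun z hz => Or.inl (lt_of_lt_of_le one_pos hz.1).ne')
  have hbdd0 : ∀ R : ℝ, ∀ z : EuclideanSpace ℝ (Fin n), 1 ≤ ‖z‖ → ‖z‖ < R →
      ‖‖z‖ ^ (-(n : ℝ))‖ ≤ 1 := by
    intro R z hz1 _
    rw [Real.norm_eq_abs, abs_of_nonneg (Real.rpow_nonneg (norm_nonneg _) _)]
    exact Real.rpow_le_one_of_one_le_of_nonpos hz1 (by linarith)
  constructor
  · -- L^{n/s} norm equals 1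
    intro R hR
    have hR0 : (0 : ℝ) < R := by linarith
    have hlog : 0 < Real.log R := Real.log_pos (by linarith)
    have hSl : 0 < Sn1 * Real.log R := mul_pos hSpos hlog
    have hpt : ∀ y : EuclideanSpace ℝ (Fin n), ((‖f R y‖₊ : ℝ≥0∞)) ^ ((n : ℝ) / s)
        = ENNReal.ofReal ((Sn1 * Real.log R)⁻¹ *
            Set.indicator {z : EuclideanSpace ℝ (Fin n) | 1 ≤ ‖z‖ ∧ ‖z‖ < R}
              (fun z => ‖z‖ ^ (-(n : ℝ))) y) := by
      intro y
      rw [← enorm_eq_nnnorm, ← ofReal_norm, ENNReal.ofReal_rpow_of_nonneg (norm_nonneg _) hns.le]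
      congr 1
      rw [hf]
      by_cases hy : y ∈ {z : EuclideanSpace ℝ (Fin n) | 1 ≤ ‖z‖ ∧ ‖z‖ < R}
      · rw [Set.indicator_of_mem hy, Set.indicator_of_mem hy]
        have hy0 : (0 : ℝ) < ‖y‖ := lt_of_lt_of_le one_pos hy.1
        have h1 : (0 : ℝ) ≤ (Sn1 * Real.log R) ^ (-(s / (n : ℝ))) :=
          (Real.rpow_pos_of_pos hSl _).le
        rw [Real.norm_eq_abs, abs_of_nonneg (mul_nonneg h1 (Real.rpow_nonneg hy0.le _)),
          Real.mul_rpow h1 (Real.rpow_nonneg hy0.le _),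
          ← Real.rpow_mul hSl.le, ← Real.rpow_mul hy0.le,
          show -(s / (n : ℝ)) * ((n : ℝ) / s) = -1 by field_simp,
          show -s * ((n : ℝ) / s) = -(n : ℝ) by field_simp,
          Real.rpow_neg_one]
      · rw [Set.indicator_of_notMem hy, Set.indicator_of_notMem hy, mul_zero, mul_zero,
          norm_zero, Real.zero_rpow hns.ne']
    have hint : Integrable (fun y : EuclideanSpace ℝ (Fin n) => (Sn1 * Real.log R)⁻¹ *
        Set.indicator {z : EuclideanSpace ℝ (Fin n) | 1 ≤ ‖z‖ ∧ ‖z‖ < R}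
          (fun z => ‖z‖ ^ (-(n : ℝ))) y) :=
      (aux_integrable hR0 _ (hwcont0 R) (hbdd0 R)).const_mul _
    have hnn : 0 ≤ᵐ[volume] (fun y : EuclideanSpace ℝ (Fin n) => (Sn1 * Real.log R)⁻¹ *
        Set.indicator {z : EuclideanSpace ℝ (Fin n) | 1 ≤ ‖z‖ ∧ ‖z‖ < R}
          (fun z => ‖z‖ ^ (-(n : ℝ))) y) := by
      refine Filter.Eventually.of_forall fun y => ?_
      exact mul_nonneg (inv_nonneg.2 hSl.le)
        (Set.indicator_nonneg (fun z _ => Real.rpow_nonneg (norm_nonneg _) _) y)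
    have hlint : ∫⁻ y, ((‖f R y‖₊ : ℝ≥0∞)) ^ ((n : ℝ) / s) = 1 := by
      rw [lintegral_congr hpt, ← ofReal_integral_eq_lintegral_ofReal hint hnn,
        integral_const_mul, aux_key hn (by linarith : (1:ℝ) ≤ R), ← hSn1,
        inv_mul_cancel₀ hSl.ne', ENNReal.ofReal_one]
    rw [eLpNorm_eq_lintegral_rpow_enorm_toReal (by simp [ENNReal.ofReal_eq_zero, not_le, hns])
      ENNReal.ofReal_ne_top]
    simp only [ENNReal.toReal_ofReal hns.le, enorm_eq_nnnorm]
    rw [hlint, ENNReal.one_rpow]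
  · -- lower bound
    refine ⟨K * 2 ^ (-(n : ℝ) + s) * Sn1 ^ (((n : ℝ) - s) / n),
      mul_pos (mul_pos hK (Real.rpow_pos_of_pos two_pos _)) (Real.rpow_pos_of_pos hSpos _), ?_⟩
    intro R hR x hx
    have hR0 : (0 : ℝ) < R := by linarith
    have hlog : 0 < Real.log R := Real.log_pos (by linarith)
    have hSl : 0 < Sn1 * Real.log R := mul_pos hSpos hlog
    have hd : 0 < 1 - ‖x‖ := by linarith
    have hps : -(n : ℝ) + s ≤ 0 := by linarith
    rw [hu]
    have hint_eq : ∀ y : EuclideanSpace ℝ (Fin n), ‖x - y‖ ^ (-(n : ℝ) + s) * f R y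
        = (Sn1 * Real.log R) ^ (-(s / (n : ℝ))) *
          Set.indicator {z : EuclideanSpace ℝ (Fin n) | 1 ≤ ‖z‖ ∧ ‖z‖ < R}
            (fun y => ‖x - y‖ ^ (-(n : ℝ) + s) * ‖y‖ ^ (-s)) y := by
      intro y
      rw [hf]
      by_cases hy : y ∈ {z : EuclideanSpace ℝ (Fin n) | 1 ≤ ‖z‖ ∧ ‖z‖ < R}
      · rw [Set.indicator_of_mem hy, Set.indicator_of_mem hy]; ring
      · rw [Set.indicator_of_notMem hy, Set.indicator_of_notMem hy]; ring
    simp only [hint_eq]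
    rw [integral_const_mul]
    have hxy_lb : ∀ y : EuclideanSpace ℝ (Fin n), 1 ≤ ‖y‖ → 1 - ‖x‖ ≤ ‖x - y‖ := by
      intro y hy
      have h := norm_sub_norm_le y x
      rw [norm_sub_rev x y]
      linarith
    have hwcont : ContinuousOn
        (fun y : EuclideanSpace ℝ (Fin n) => ‖x - y‖ ^ (-(n : ℝ) + s) * ‖y‖ ^ (-s))
        {z : EuclideanSpace ℝ (Fin n) | 1 ≤ ‖z‖ ∧ ‖z‖ < R} := by
      apply ContinuousOn.mul
      · refine ContinuousOn.rpow_const ((continuous_const.sub continuous_id).norm.continuousOn)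
          fun y hy => Or.inl ?_
        have := hxy_lb y hy.1
        intro h0
        rw [h0] at this
        linarith
      · exact ContinuousOn.rpow_const continuous_norm.continuousOn
          fun y hy => Or.inl (lt_of_lt_of_le one_pos hy.1).ne'
    have hbound : ∀ z : EuclideanSpace ℝ (Fin n), 1 ≤ ‖z‖ → ‖z‖ < R →
        ‖‖x - z‖ ^ (-(n : ℝ) + s) * ‖z‖ ^ (-s)‖ ≤ (1 - ‖x‖) ^ (-(n : ℝ) + s) := by
      intro z hz1 _
      rw [Real.norm_eq_abs, abs_of_nonneg
        (mul_nonneg (Real.rpow_nonneg (norm_nonneg _) _) (Real.rpow_nonneg (norm_nonneg _) _))]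
      have h1 : ‖x - z‖ ^ (-(n : ℝ) + s) ≤ (1 - ‖x‖) ^ (-(n : ℝ) + s) :=
        Real.rpow_le_rpow_of_nonpos hd (hxy_lb z hz1) hps
      have h2 : ‖z‖ ^ (-s) ≤ 1 :=
        Real.rpow_le_one_of_one_le_of_nonpos hz1 (by linarith)
      calc ‖x - z‖ ^ (-(n : ℝ) + s) * ‖z‖ ^ (-s)
          ≤ (1 - ‖x‖) ^ (-(n : ℝ) + s) * 1 := by
            apply mul_le_mul h1 h2 (Real.rpow_nonneg (norm_nonneg _) _)
              (Real.rpow_nonneg hd.le _)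
        _ = (1 - ‖x‖) ^ (-(n : ℝ) + s) := mul_one _
    have hInt := aux_integrable hR0 _ hwcont hbound
    have hLHSpt : ∀ y : EuclideanSpace ℝ (Fin n),
        Set.indicator {z : EuclideanSpace ℝ (Fin n) | 1 ≤ ‖z‖ ∧ ‖z‖ < R}
          (fun y => (2 : ℝ) ^ (-(n : ℝ) + s) * ‖y‖ ^ (-(n : ℝ))) y
        = (2 : ℝ) ^ (-(n : ℝ) + s) *
          Set.indicator {z : EuclideanSpace ℝ (Fin n) | 1 ≤ ‖z‖ ∧ ‖z‖ < R}
            (fun z => ‖z‖ ^ (-(n : ℝ))) y := by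
      intro y
      by_cases hy : y ∈ {z : EuclideanSpace ℝ (Fin n) | 1 ≤ ‖z‖ ∧ ‖z‖ < R}
      · rw [Set.indicator_of_mem hy, Set.indicator_of_mem hy]
      · rw [Set.indicator_of_notMem hy, Set.indicator_of_notMem hy, mul_zero]
    have hmono : (2 : ℝ) ^ (-(n : ℝ) + s) * (Sn1 * Real.log R)
        ≤ ∫ y, Set.indicator {z : EuclideanSpace ℝ (Fin n) | 1 ≤ ‖z‖ ∧ ‖z‖ < R}
            (fun y => ‖x - y‖ ^ (-(n : ℝ) + s) * ‖y‖ ^ (-s)) y := by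
      have := integral_mono_of_nonneg
        (f := fun y : EuclideanSpace ℝ (Fin n) =>
          Set.indicator {z : EuclideanSpace ℝ (Fin n) | 1 ≤ ‖z‖ ∧ ‖z‖ < R}
            (fun y => (2 : ℝ) ^ (-(n : ℝ) + s) * ‖y‖ ^ (-(n : ℝ))) y)
        (g := fun y : EuclideanSpace ℝ (Fin n) =>
          Set.indicator {z : EuclideanSpace ℝ (Fin n) | 1 ≤ ‖z‖ ∧ ‖z‖ < R}
            (fun y => ‖x - y‖ ^ (-(n : ℝ) + s) * ‖y‖ ^ (-s)) y)
        (Filter.Eventually.of_forall fun y => Set.indicator_nonneg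
          (fun z _ => mul_nonneg (Real.rpow_nonneg (by norm_num) _)
            (Real.rpow_nonneg (norm_nonneg _) _)) y)
        hInt
        (Filter.Eventually.of_forall ?_)
      · calc (2 : ℝ) ^ (-(n : ℝ) + s) * (Sn1 * Real.log R)
            = ∫ y, Set.indicator {z : EuclideanSpace ℝ (Fin n) | 1 ≤ ‖z‖ ∧ ‖z‖ < R}
                (fun y => (2 : ℝ) ^ (-(n : ℝ) + s) * ‖y‖ ^ (-(n : ℝ))) y := by
              simp only [hLHSpt]
              rw [integral_const_mul, aux_key hn (by linarith : (1:ℝ) ≤ R), ← hSn1]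
          _ ≤ _ := this
      · intro y
        dsimp only
        by_cases hy : y ∈ {z : EuclideanSpace ℝ (Fin n) | 1 ≤ ‖z‖ ∧ ‖z‖ < R}
        · rw [Set.indicator_of_mem hy, Set.indicator_of_mem hy]
          have hy1 : 1 ≤ ‖y‖ := hy.1
          have hy0 : (0 : ℝ) < ‖y‖ := lt_of_lt_of_le one_pos hy1
          have hxy0 : 0 < ‖x - y‖ := lt_of_lt_of_le hd (hxy_lb y hy1)
          have h2 : ‖x - y‖ ≤ 2 * ‖y‖ := by
            calc ‖x - y‖ ≤ ‖x‖ + ‖y‖ := norm_sub_le x y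
              _ ≤ 2 * ‖y‖ := by linarith
          have hkey : (2 * ‖y‖) ^ (-(n : ℝ) + s) ≤ ‖x - y‖ ^ (-(n : ℝ) + s) :=
            Real.rpow_le_rpow_of_nonpos hxy0 h2 hps
          have hsplit : (2 : ℝ) ^ (-(n : ℝ) + s) * ‖y‖ ^ (-(n : ℝ))
              = (2 * ‖y‖) ^ (-(n : ℝ) + s) * ‖y‖ ^ (-s) := by
            rw [Real.mul_rpow (by norm_num : (0:ℝ) ≤ 2) hy0.le, mul_assoc,
              ← Real.rpow_add hy0, show (-(n : ℝ) + s) + -s = -(n : ℝ) by ring]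
          rw [hsplit]
          exact mul_le_mul_of_nonneg_right hkey (Real.rpow_nonneg hy0.le _)
        · rw [Set.indicator_of_notMem hy, Set.indicator_of_notMem hy]
    have hkeyrpow : ∀ a : ℝ, 0 < a →
        a ^ (-(s / (n : ℝ))) * a = a ^ (((n : ℝ) - s) / n) := by
      intro a ha
      rw [show (((n : ℝ) - s) / n) = -(s / (n : ℝ)) + 1 by field_simp; ring,
        Real.rpow_add ha, Real.rpow_one]
    calc K * 2 ^ (-(n : ℝ) + s) * Sn1 ^ (((n : ℝ) - s) / n) * Real.log R ^ (((n : ℝ) - s) / n)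
        = K * ((Sn1 * Real.log R) ^ (-(s / (n : ℝ))) *
            ((2 : ℝ) ^ (-(n : ℝ) + s) * (Sn1 * Real.log R))) := by
          rw [Real.mul_rpow hSpos.le hlog.le, ← hkeyrpow Sn1 hSpos, ← hkeyrpow _ hlog]
          ring
      _ ≤ K * ((Sn1 * Real.log R) ^ (-(s / (n : ℝ))) *
            ∫ y, Set.indicator {z : EuclideanSpace ℝ (Fin n) | 1 ≤ ‖z‖ ∧ ‖z‖ < R}
              (fun y => ‖x - y‖ ^ (-(n : ℝ) + s) * ‖y‖ ^ (-s)) y) := by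
          apply mul_le_mul_of_nonneg_left _ hK.le
          exact mul_le_mul_of_nonneg_left hmono (Real.rpow_pos_of_pos hSl _).le
end

section
/- Let n ≥ 2 and s ∈ (0,1). Then for r ≥ 1, ∫_0^r (1 - ρ/r)^{(s-1)n/(n-s)} ρ^{n-1}/(1+ρ²)^{n/2} dρ ≤ C(1 + ln r), and ∫_r^∞ (1 - r/ρ)^{(s-1)n/(n-s)} ρ^{-1}/(1+ρ²)^{n/2} dρ ≤ C r^{-n}, with C depending only on n and s. Here the exponent satisfies (s-1)n/(n-s) > -1. -/
open MeasureTheory Real Set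

lemma half_rpow_le {α x : ℝ} (hα : α ≤ 0) (hx : 1/2 ≤ x) : x ^ α ≤ 2 ^ (-α) := by
  calc x ^ α ≤ (1/2 : ℝ) ^ α := rpow_le_rpow_of_nonpos (by norm_num) hx hα
    _ = 2 ^ (-α) := by
        rw [one_div, Real.inv_rpow (by norm_num), ← Real.rpow_neg (by norm_num)]

lemma sq_rpow_half {ρ : ℝ} (hρ : 0 ≤ ρ) (c : ℝ) : (ρ ^ 2 : ℝ) ^ (c / 2) = ρ ^ c := by
  rw [← Real.rpow_natCast ρ 2, ← Real.rpow_mul hρ]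
  ring_nf

lemma pow_le_rpow_half {n : ℕ} {ρ : ℝ} (hρ : 0 ≤ ρ) :
    ρ ^ n ≤ (1 + ρ ^ 2) ^ ((n : ℝ) / 2) := by
  have h : (ρ ^ 2 : ℝ) ^ ((n : ℝ) / 2) ≤ (1 + ρ ^ 2) ^ ((n : ℝ) / 2) :=
    Real.rpow_le_rpow (by positivity) (by linarith) (by positivity)
  calc (ρ:ℝ) ^ n = (ρ ^ 2 : ℝ) ^ ((n : ℝ) / 2) := by
        rw [sq_rpow_half hρ, Real.rpow_natCast]
    _ ≤ _ := h


lemma f_le_inv {n : ℕ} (hn : 1 ≤ n) {ρ : ℝ} (hρ : 0 < ρ) :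
    ρ ^ (n-1) / (1 + ρ ^ 2) ^ ((n : ℝ) / 2) ≤ ρ⁻¹ := by
  rw [div_le_iff₀ (by positivity), inv_mul_eq_div, le_div_iff₀ hρ]
  calc ρ ^ (n-1) * ρ = ρ ^ n := by rw [← pow_succ, Nat.sub_add_cancel hn]
    _ ≤ _ := pow_le_rpow_half hρ.le

lemma f_le_arctanish {n : ℕ} (hn : 2 ≤ n) {ρ : ℝ} (hρ : 0 < ρ) :
    ρ ^ (n-1) / (1 + ρ ^ 2) ^ ((n : ℝ) / 2) ≤ ρ / (1 + ρ ^ 2) := by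
  rw [div_le_div_iff₀ (by positivity) (by positivity)]
  have key : (ρ:ℝ) ^ (n-2) ≤ (1 + ρ ^ 2) ^ (((n:ℝ) - 2) / 2) := by
    calc (ρ:ℝ) ^ (n-2) = (ρ ^ 2 : ℝ) ^ (((n:ℝ)-2) / 2) := by
          rw [sq_rpow_half hρ.le, show ((n:ℝ) - 2) = ((n - 2 : ℕ) : ℝ) by
            push_cast [Nat.cast_sub hn]; ring, Real.rpow_natCast]
      _ ≤ _ := Real.rpow_le_rpow (by positivity) (by linarith)
            (by have h2 : (2:ℝ) ≤ n := by exact_mod_cast hn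
                linarith)
  have hsplit : (1 + ρ ^ 2 : ℝ) ^ ((n:ℝ)/2) = (1 + ρ^2) ^ (((n:ℝ)-2)/2) * (1 + ρ^2) := by
    rw [show (n:ℝ)/2 = ((n:ℝ)-2)/2 + 1 by ring, Real.rpow_add (by positivity),
      Real.rpow_one]
  have h1 : ρ ^ (n-1) = ρ * ρ ^ (n - 2) := by
    rw [← pow_succ', show n - 2 + 1 = n - 1 by omega]
  rw [hsplit, h1]
  calc ρ * ρ ^ (n-2) * (1 + ρ^2) ≤ ρ * (1 + ρ^2) ^ (((n:ℝ)-2)/2) * (1 + ρ^2) := by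
        have := mul_le_mul_of_nonneg_left key hρ.le
        nlinarith [sq_nonneg ρ]
    _ = ρ * ((1 + ρ^2) ^ (((n:ℝ)-2)/2) * (1 + ρ^2)) := by ring

lemma ii_sub_left {α r : ℝ} (hα : -1 < α) (hr : 0 < r) :
    IntervalIntegrable (fun ρ => (r - ρ) ^ α) volume 0 r := by
  have h := (intervalIntegral.intervalIntegrable_rpow' hα (a := 0) (b := r)).comp_sub_left r
  simpa using h.symm

lemma int_sub_left {α r : ℝ} (hα : -1 < α) (hr : 0 < r) :
    ∫ ρ in Set.Ioc 0 r, (r - ρ) ^ α = r ^ (α + 1) / (α + 1) := by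
  rw [← intervalIntegral.integral_of_le hr.le,
    intervalIntegral.integral_comp_sub_left (fun x => x ^ α) r]
  simp only [sub_zero, sub_self]
  rw [integral_rpow (Or.inl hα)]
  rw [Real.zero_rpow (by linarith)]
  ring

lemma ii_sub_right {α r : ℝ} (hα : -1 < α) (hr : 0 < r) :
    IntervalIntegrable (fun ρ => (ρ - r) ^ α) volume r (2*r) := by
  have h := (intervalIntegral.intervalIntegrable_rpow' hα (a := 0) (b := r)).comp_sub_right r
  simpa [two_mul] using h

lemma int_sub_right {α r : ℝ} (hα : -1 < α) (hr : 0 < r) :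
    ∫ ρ in Set.Ioc r (2*r), (ρ - r) ^ α = r ^ (α + 1) / (α + 1) := by
  rw [← intervalIntegral.integral_of_le (by linarith),
    intervalIntegral.integral_comp_sub_right (fun x => x ^ α) r]
  have : 2 * r - r = r := by ring
  rw [this, sub_self, integral_rpow (Or.inl hα), Real.zero_rpow (by linarith)]
  ring

lemma int_log_sq {r : ℝ} (hr : 0 ≤ r) :
    ∫ ρ in Set.Ioc 0 r, ρ / (1 + ρ ^ 2) = Real.log (1 + r ^ 2) / 2 := by
  rw [← intervalIntegral.integral_of_le hr]
  have h : ∀ x ∈ Set.uIcc (0:ℝ) r, HasDerivAt (fun x : ℝ => Real.log (1 + x ^ 2) / 2)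
      (x / (1 + x ^ 2)) x := by
    intro x _
    have h1 : HasDerivAt (fun x : ℝ => 1 + x ^ 2) (2 * x) x := by
      simpa using ((hasDerivAt_pow 2 x).const_add 1)
    have h2 := (h1.log (by positivity)).div_const 2
    refine h2.congr_deriv ?_
    ring
  rw [intervalIntegral.integral_eq_sub_of_hasDerivAt h ?_]
  · norm_num
  · apply ContinuousOn.intervalIntegrable
    fun_prop (disch := intro x _; positivity)

lemma bound1 {n : ℕ} (hn : 2 ≤ n) {α : ℝ} (hα1 : -1 < α) (hα0 : α < 0)
    {r : ℝ} (hr : 1 ≤ r) :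
    (∫ ρ in Set.Ioc (0:ℝ) r, (1 - ρ / r) ^ α * (ρ ^ (n-1) / (1 + ρ ^ 2) ^ ((n:ℝ)/2)))
      ≤ ((2:ℝ) ^ (-α) + 2 / (α + 1)) * (1 + Real.log r) := by
  have hr0 : (0:ℝ) < r := by linarith
  have hα1' : (0:ℝ) < α + 1 := by linarith
  set H : ℝ → ℝ := fun ρ => 2 ^ (-α) * (ρ / (1 + ρ ^ 2)) + (2 / r) * r ^ (-α) * (r - ρ) ^ α
    with hH
  have hH1 : IntegrableOn (fun ρ : ℝ => ρ / (1 + ρ ^ 2)) (Set.Ioc 0 r) := by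
    apply Continuous.integrableOn_Ioc
    fun_prop (disch := intro x; positivity)
  have hH2 : IntegrableOn (fun ρ : ℝ => (r - ρ) ^ α) (Set.Ioc 0 r) := by
    have := ii_sub_left hα1 hr0
    rwa [intervalIntegrable_iff_integrableOn_Ioc_of_le hr0.le] at this
  have hHint : IntegrableOn H (Set.Ioc 0 r) := (hH1.const_mul _).add (hH2.const_mul _)
  have hpt : ∀ ρ ∈ Set.Ioc (0:ℝ) r,
      (1 - ρ / r) ^ α * (ρ ^ (n-1) / (1 + ρ ^ 2) ^ ((n:ℝ)/2)) ≤ H ρ := by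
    rintro ρ ⟨hρ0, hρr⟩
    have hbase : 0 ≤ 1 - ρ / r := by
      rw [sub_nonneg, div_le_one hr0]; exact hρr
    have hfpos : 0 ≤ ρ ^ (n-1) / (1 + ρ ^ 2) ^ ((n:ℝ)/2) := by positivity
    rcases le_or_gt ρ (r/2) with h | h
    · have h1 : (1 - ρ / r) ^ α ≤ 2 ^ (-α) := by
        apply half_rpow_le hα0.le
        have : ρ / r ≤ 1/2 := by
          rw [div_le_div_iff₀ hr0 (by norm_num)]; linarith
        linarith
      have h2 := f_le_arctanish hn hρ0
      have key : (1 - ρ / r) ^ α * (ρ ^ (n-1) / (1 + ρ ^ 2) ^ ((n:ℝ)/2))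
          ≤ 2 ^ (-α) * (ρ / (1 + ρ ^ 2)) :=
        mul_le_mul h1 h2 hfpos (by positivity)
      have hnn : 0 ≤ (2 / r) * r ^ (-α) * (r - ρ) ^ α := by
        have : (0:ℝ) ≤ (r - ρ) ^ α := Real.rpow_nonneg (by linarith) _
        positivity
      rw [hH]; dsimp only; linarith
    · have h3 : (1 - ρ / r) ^ α = r ^ (-α) * (r - ρ) ^ α := by
        rw [show 1 - ρ / r = (r - ρ)/r by field_simp,
          Real.div_rpow (by linarith) hr0.le, Real.rpow_neg hr0.le,
          div_eq_mul_inv, mul_comm]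
      have h4 : ρ ^ (n-1) / (1 + ρ ^ 2) ^ ((n:ℝ)/2) ≤ 2 / r := by
        refine le_trans (f_le_inv (by omega) hρ0) ?_
        rw [inv_eq_one_div, div_le_div_iff₀ hρ0 hr0]; linarith
      have hnn2 : 0 ≤ r ^ (-α) * (r - ρ) ^ α := by
        have : (0:ℝ) ≤ (r - ρ) ^ α := Real.rpow_nonneg (by linarith) _
        positivity
      have key : (1 - ρ / r) ^ α * (ρ ^ (n-1) / (1 + ρ ^ 2) ^ ((n:ℝ)/2))
          ≤ (2 / r) * r ^ (-α) * (r - ρ) ^ α := by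
        rw [h3]
        calc r ^ (-α) * (r - ρ) ^ α * (ρ ^ (n-1) / (1 + ρ ^ 2) ^ ((n:ℝ)/2))
            ≤ r ^ (-α) * (r - ρ) ^ α * (2 / r) := mul_le_mul_of_nonneg_left h4 hnn2
          _ = (2 / r) * r ^ (-α) * (r - ρ) ^ α := by ring
      have hnn1 : 0 ≤ 2 ^ (-α) * (ρ / (1 + ρ ^ 2)) := by positivity
      rw [hH]; dsimp only; linarith
  have step1 : (∫ ρ in Set.Ioc (0:ℝ) r,
      (1 - ρ / r) ^ α * (ρ ^ (n-1) / (1 + ρ ^ 2) ^ ((n:ℝ)/2))) ≤ ∫ ρ in Set.Ioc (0:ℝ) r, H ρ := by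
    apply integral_mono_of_nonneg
    · refine (ae_restrict_iff' measurableSet_Ioc).mpr (Filter.Eventually.of_forall ?_)
      rintro ρ ⟨hρ0, hρr⟩
      have hbase : 0 ≤ 1 - ρ / r := by rw [sub_nonneg, div_le_one hr0]; exact hρr
      have := Real.rpow_nonneg hbase α
      positivity
    · exact hHint
    · exact (ae_restrict_iff' measurableSet_Ioc).mpr (Filter.Eventually.of_forall hpt)
  have step2 : (∫ ρ in Set.Ioc (0:ℝ) r, H ρ)
      = 2 ^ (-α) * (Real.log (1 + r ^ 2) / 2) + (2 / r) * r ^ (-α) * (r ^ (α+1) / (α+1)) := by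
    rw [hH]
    rw [integral_add (hH1.const_mul _) (hH2.const_mul _), integral_const_mul,
      integral_const_mul, int_log_sq hr0.le, int_sub_left hα1 hr0]
  have hrpow : r ^ (-α) * r ^ (α+1) = r := by
    rw [← Real.rpow_add hr0, show -α + (α+1) = 1 by ring, Real.rpow_one]
  have step3 : (2 / r) * r ^ (-α) * (r ^ (α+1) / (α+1)) = 2 / (α+1) := by
    have hne : r ≠ 0 := hr0.ne'
    calc (2 / r) * r ^ (-α) * (r ^ (α+1) / (α+1))
        = (2 / (α+1)) * ((r ^ (-α) * r ^ (α+1)) / r) := by ring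
      _ = (2 / (α+1)) * (r / r) := by rw [hrpow]
      _ = 2 / (α+1) := by rw [div_self hne, mul_one]
  have hlog : Real.log (1 + r ^ 2) / 2 ≤ 1 + Real.log r := by
    have h1 : Real.log (1 + r ^ 2) ≤ Real.log (2 * r ^ 2) := by
      apply Real.log_le_log (by positivity); nlinarith
    have h2 : Real.log (2 * r ^ 2) = Real.log 2 + 2 * Real.log r := by
      rw [Real.log_mul (by norm_num) (by positivity), Real.log_pow]
      push_cast; ring
    have h3 : Real.log 2 ≤ 1 := by
      have := Real.log_le_sub_one_of_pos (by norm_num : (0:ℝ) < 2); linarith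
    have h4 : 0 ≤ Real.log r := Real.log_nonneg hr
    linarith
  have h2pow : (0:ℝ) < 2 ^ (-α) := Real.rpow_pos_of_pos (by norm_num) _
  have hlogr : 0 ≤ Real.log r := Real.log_nonneg hr
  calc _ ≤ ∫ ρ in Set.Ioc (0:ℝ) r, H ρ := step1
    _ = 2 ^ (-α) * (Real.log (1 + r ^ 2) / 2) + 2 / (α+1) := by rw [step2, step3]
    _ ≤ 2 ^ (-α) * (1 + Real.log r) + 2 / (α+1) := by nlinarith
    _ ≤ ((2:ℝ) ^ (-α) + 2 / (α + 1)) * (1 + Real.log r) := by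
        have h5 : (0:ℝ) < 2 / (α+1) := by positivity
        nlinarith

lemma f2_le {n : ℕ} {ρ : ℝ} (hρ : 0 < ρ) :
    ρ⁻¹ / (1 + ρ ^ 2) ^ ((n:ℝ)/2) ≤ ρ ^ (-(n:ℝ) - 1) := by
  have h1 : (ρ:ℝ) ^ n ≤ (1 + ρ ^ 2) ^ ((n:ℝ)/2) := pow_le_rpow_half hρ.le
  have h2 : (0:ℝ) < ρ ^ n := by positivity
  have key : 1 / (1 + ρ ^ 2) ^ ((n:ℝ)/2) ≤ 1 / ρ ^ n := one_div_le_one_div_of_le h2 h1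
  calc ρ⁻¹ / (1 + ρ ^ 2) ^ ((n:ℝ)/2) = ρ⁻¹ * (1 / (1 + ρ ^ 2) ^ ((n:ℝ)/2)) := by ring
    _ ≤ ρ⁻¹ * (1 / ρ ^ n) := mul_le_mul_of_nonneg_left key (by positivity)
    _ = ρ ^ (-(n:ℝ) - 1) := by
        rw [one_div, ← Real.rpow_natCast ρ n, ← Real.rpow_neg hρ.le,
          ← Real.rpow_neg_one, ← Real.rpow_add hρ]
        ring_nf

lemma bound2 {n : ℕ} (hn : 2 ≤ n) {α : ℝ} (hα1 : -1 < α) (hα0 : α < 0)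
    {r : ℝ} (hr : 1 ≤ r) :
    (∫ ρ in Set.Ioi r, (1 - r / ρ) ^ α * (ρ⁻¹ / (1 + ρ ^ 2) ^ ((n:ℝ)/2)))
      ≤ ((2:ℝ) ^ (-α) / (α + 1) + 2 ^ (-α)) * r ^ (-(n:ℝ)) := by
  have hr0 : (0:ℝ) < r := by linarith
  have hα1' : (0:ℝ) < α + 1 := by linarith
  have hn1 : (1:ℝ) ≤ (n:ℝ) := by exact_mod_cast Nat.one_le_of_lt hn
  have hexp : -(n:ℝ) - 1 < -1 := by linarith
  have hmeas : Measurable (fun ρ : ℝ => (1 - r / ρ) ^ α * (ρ⁻¹ / (1 + ρ ^ 2) ^ ((n:ℝ)/2))) := by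
    apply Measurable.mul
    · exact (measurable_const.sub (measurable_const.div measurable_id)).pow measurable_const
    · exact measurable_inv.div
        ((measurable_const.add (measurable_id.pow measurable_const)).pow measurable_const)
  -- majorants
  set K : ℝ := r ^ (-(n:ℝ) - 1) * (2*r) ^ (-α) with hK
  have hKpos : 0 < K := by positivity
  -- pointwise bounds
  have hpt1 : ∀ ρ ∈ Set.Ioc r (2*r),
      (1 - r / ρ) ^ α * (ρ⁻¹ / (1 + ρ ^ 2) ^ ((n:ℝ)/2)) ≤ K * (ρ - r) ^ α := by
    rintro ρ ⟨hρ1, hρ2⟩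
    have hρ0 : (0:ℝ) < ρ := by linarith
    have hsub : (0:ℝ) < ρ - r := by linarith
    have hb : 1 - r / ρ = (ρ - r) / ρ := by field_simp
    have h5 : (ρ - r) / (2*r) ≤ (ρ - r) / ρ := by gcongr
    have h6 : ((ρ - r) / ρ) ^ α ≤ ((ρ - r) / (2*r)) ^ α :=
      Real.rpow_le_rpow_of_nonpos (by positivity) h5 hα0.le
    have h7 : ((ρ - r) / (2*r)) ^ α = (ρ - r) ^ α * (2*r) ^ (-α) := by
      rw [Real.div_rpow hsub.le (by positivity), Real.rpow_neg (by positivity),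
        div_eq_mul_inv]
    have h8 : ρ ^ (-(n:ℝ) - 1) ≤ r ^ (-(n:ℝ) - 1) :=
      Real.rpow_le_rpow_of_nonpos hr0 hρ1.le (by linarith)
    have h9 : ρ⁻¹ / (1 + ρ ^ 2) ^ ((n:ℝ)/2) ≤ r ^ (-(n:ℝ) - 1) := (f2_le hρ0).trans h8
    have h10 : (1 - r / ρ) ^ α ≤ (ρ - r) ^ α * (2*r) ^ (-α) := by
      rw [hb]; rw [h7] at h6; exact h6
    calc (1 - r / ρ) ^ α * (ρ⁻¹ / (1 + ρ ^ 2) ^ ((n:ℝ)/2))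
        ≤ ((ρ - r) ^ α * (2*r) ^ (-α)) * (r ^ (-(n:ℝ) - 1)) := by
          apply mul_le_mul h10 h9 (by positivity)
          positivity
      _ = K * (ρ - r) ^ α := by rw [hK]; ring
  have hpt2 : ∀ ρ ∈ Set.Ioi (2*r),
      (1 - r / ρ) ^ α * (ρ⁻¹ / (1 + ρ ^ 2) ^ ((n:ℝ)/2)) ≤ 2 ^ (-α) * ρ ^ (-(n:ℝ) - 1) := by
    intro ρ hρ
    have hρ2r : 2*r < ρ := hρ
    have hρ0 : (0:ℝ) < ρ := by linarith
    have h1 : (1:ℝ)/2 ≤ 1 - r / ρ := by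
      have : r / ρ ≤ 1/2 := by
        rw [div_le_div_iff₀ hρ0 (by norm_num)]; linarith
      linarith
    have h2 : (1 - r / ρ) ^ α ≤ 2 ^ (-α) := half_rpow_le hα0.le h1
    have h3 := f2_le (n := n) hρ0
    apply mul_le_mul h2 h3 (by positivity) (by positivity)
  -- nonnegativity of integrand
  have hnonneg : ∀ ρ : ℝ, r < ρ → 0 ≤ (1 - r / ρ) ^ α * (ρ⁻¹ / (1 + ρ ^ 2) ^ ((n:ℝ)/2)) := by
    intro ρ hρ
    have hρ0 : (0:ℝ) < ρ := by linarith
    have : 0 ≤ 1 - r / ρ := by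
      rw [sub_nonneg, div_le_one hρ0]; linarith
    have := Real.rpow_nonneg this α
    positivity
  -- integrability of majorants
  have hmaj1 : IntegrableOn (fun ρ : ℝ => K * (ρ - r) ^ α) (Set.Ioc r (2*r)) := by
    have := (ii_sub_right hα1 hr0)
    rw [intervalIntegrable_iff_integrableOn_Ioc_of_le (by linarith)] at this
    exact this.const_mul _
  have hmaj2 : IntegrableOn (fun ρ : ℝ => 2 ^ (-α) * ρ ^ (-(n:ℝ) - 1)) (Set.Ioi (2*r)) :=
    (integrableOn_Ioi_rpow_of_lt hexp (by linarith)).const_mul _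
  -- integrability of the integrand on each piece
  have hint1 : IntegrableOn (fun ρ : ℝ => (1 - r / ρ) ^ α * (ρ⁻¹ / (1 + ρ ^ 2) ^ ((n:ℝ)/2)))
      (Set.Ioc r (2*r)) := by
    apply Integrable.mono hmaj1 (hmeas.aestronglyMeasurable.restrict)
    refine (ae_restrict_iff' measurableSet_Ioc).mpr (Filter.Eventually.of_forall ?_)
    intro ρ hρ
    rw [Real.norm_eq_abs, Real.norm_eq_abs, abs_of_nonneg (hnonneg ρ hρ.1),
      abs_of_nonneg (mul_nonneg hKpos.le
        (Real.rpow_nonneg (by linarith [hρ.1] : (0:ℝ) ≤ ρ - r) α))]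
    exact hpt1 ρ hρ
  have hint2 : IntegrableOn (fun ρ : ℝ => (1 - r / ρ) ^ α * (ρ⁻¹ / (1 + ρ ^ 2) ^ ((n:ℝ)/2)))
      (Set.Ioi (2*r)) := by
    apply Integrable.mono hmaj2 (hmeas.aestronglyMeasurable.restrict)
    refine (ae_restrict_iff' measurableSet_Ioi).mpr (Filter.Eventually.of_forall ?_)
    intro ρ hρ
    have hρr : r < ρ := by have : 2*r < ρ := hρ; linarith
    have hρ0 : (0:ℝ) < ρ := by linarith
    rw [Real.norm_eq_abs, Real.norm_eq_abs, abs_of_nonneg (hnonneg ρ hρr),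
      abs_of_nonneg (by positivity)]
    exact hpt2 ρ hρ
  -- split the integral
  have hsplit : Set.Ioi r = Set.Ioc r (2*r) ∪ Set.Ioi (2*r) :=
    (Set.Ioc_union_Ioi_eq_Ioi (by linarith)).symm
  rw [hsplit, setIntegral_union Set.Ioc_disjoint_Ioi_same measurableSet_Ioi hint1 hint2]
  -- bound each piece
  have hb1 : (∫ ρ in Set.Ioc r (2*r), (1 - r / ρ) ^ α * (ρ⁻¹ / (1 + ρ ^ 2) ^ ((n:ℝ)/2)))
      ≤ 2 ^ (-α) / (α+1) * r ^ (-(n:ℝ)) := by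
    have step : (∫ ρ in Set.Ioc r (2*r), (1 - r / ρ) ^ α * (ρ⁻¹ / (1 + ρ ^ 2) ^ ((n:ℝ)/2)))
        ≤ ∫ ρ in Set.Ioc r (2*r), K * (ρ - r) ^ α := by
      apply integral_mono_of_nonneg
      · exact (ae_restrict_iff' measurableSet_Ioc).mpr
          (Filter.Eventually.of_forall fun ρ hρ => hnonneg ρ hρ.1)
      · exact hmaj1
      · exact (ae_restrict_iff' measurableSet_Ioc).mpr (Filter.Eventually.of_forall hpt1)
    have hval : (∫ ρ in Set.Ioc r (2*r), K * (ρ - r) ^ α) = K * (r ^ (α+1) / (α+1)) := by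
      rw [integral_const_mul, int_sub_right hα1 hr0]
    have hcalc : K * (r ^ (α+1) / (α+1)) = 2 ^ (-α) / (α+1) * r ^ (-(n:ℝ)) := by
      rw [hK, Real.mul_rpow (by norm_num) hr0.le]
      have : r ^ (-(n:ℝ) - 1) * r ^ (-α) * r ^ (α+1) = r ^ (-(n:ℝ)) := by
        rw [← Real.rpow_add hr0, ← Real.rpow_add hr0]
        ring_nf
      calc r ^ (-(n:ℝ) - 1) * ((2:ℝ) ^ (-α) * r ^ (-α)) * (r ^ (α+1) / (α+1))
          = 2 ^ (-α) / (α+1) * (r ^ (-(n:ℝ) - 1) * r ^ (-α) * r ^ (α+1)) := by ring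
        _ = 2 ^ (-α) / (α+1) * r ^ (-(n:ℝ)) := by rw [this]
    rw [hval] at step; rw [← hcalc]; exact step
  have hb2 : (∫ ρ in Set.Ioi (2*r), (1 - r / ρ) ^ α * (ρ⁻¹ / (1 + ρ ^ 2) ^ ((n:ℝ)/2)))
      ≤ 2 ^ (-α) * r ^ (-(n:ℝ)) := by
    have step : (∫ ρ in Set.Ioi (2*r), (1 - r / ρ) ^ α * (ρ⁻¹ / (1 + ρ ^ 2) ^ ((n:ℝ)/2)))
        ≤ ∫ ρ in Set.Ioi (2*r), 2 ^ (-α) * ρ ^ (-(n:ℝ) - 1) := by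
      apply integral_mono_of_nonneg
      · refine (ae_restrict_iff' measurableSet_Ioi).mpr
          (Filter.Eventually.of_forall fun ρ hρ => hnonneg ρ (by
            have : 2*r < ρ := hρ; linarith))
      · exact hmaj2
      · exact (ae_restrict_iff' measurableSet_Ioi).mpr (Filter.Eventually.of_forall hpt2)
    have hval : (∫ ρ in Set.Ioi (2*r), 2 ^ (-α) * ρ ^ (-(n:ℝ) - 1))
        = 2 ^ (-α) * (-(2*r) ^ ((-(n:ℝ) - 1) + 1) / ((-(n:ℝ) - 1) + 1)) := by
      rw [integral_const_mul, integral_Ioi_rpow_of_lt hexp (by linarith)]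
    have hsimp : (-(2*r) ^ ((-(n:ℝ) - 1) + 1) / ((-(n:ℝ) - 1) + 1)) = (2*r) ^ (-(n:ℝ)) / n := by
      rw [show (-(n:ℝ) - 1) + 1 = -(n:ℝ) by ring]
      rw [neg_div, div_neg, neg_neg]
    have hle : (2*r) ^ (-(n:ℝ)) / n ≤ r ^ (-(n:ℝ)) := by
      have h1 : ((2:ℝ)*r) ^ (-(n:ℝ)) = 2 ^ (-(n:ℝ)) * r ^ (-(n:ℝ)) :=
        Real.mul_rpow (by norm_num) hr0.le
      have h2 : (2:ℝ) ^ (-(n:ℝ)) ≤ 1 :=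
        Real.rpow_le_one_of_one_le_of_nonpos (by norm_num) (by linarith)
      have h3 : (0:ℝ) < r ^ (-(n:ℝ)) := Real.rpow_pos_of_pos hr0 _
      have h4 : ((2:ℝ)*r) ^ (-(n:ℝ)) ≤ r ^ (-(n:ℝ)) := by
        rw [h1]; nlinarith
      have h5 : ((2:ℝ)*r) ^ (-(n:ℝ)) / n ≤ (2*r) ^ (-(n:ℝ)) := by
        rw [div_le_iff₀ (by linarith : (0:ℝ) < (n:ℝ))]
        nlinarith [Real.rpow_pos_of_pos (by linarith : (0:ℝ) < 2*r) (-(n:ℝ))]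
      linarith
    calc _ ≤ ∫ ρ in Set.Ioi (2*r), 2 ^ (-α) * ρ ^ (-(n:ℝ) - 1) := step
      _ = 2 ^ (-α) * ((2*r) ^ (-(n:ℝ)) / n) := by rw [hval, hsimp]
      _ ≤ 2 ^ (-α) * r ^ (-(n:ℝ)) := by
          apply mul_le_mul_of_nonneg_left hle (by positivity)
  have : ((2:ℝ) ^ (-α) / (α + 1) + 2 ^ (-α)) * r ^ (-(n:ℝ))
      = 2 ^ (-α) / (α+1) * r ^ (-(n:ℝ)) + 2 ^ (-α) * r ^ (-(n:ℝ)) := by ring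
  rw [this]
  exact add_le_add hb1 hb2

theorem stmt_12 {n : ℕ} (hn : 2 ≤ n) (s : ℝ) (hs0 : 0 < s) (hs1 : s < 1) :
    ((s - 1) * n / ((n : ℝ) - s) > -1) ∧
    ∃ C > 0, ∀ r : ℝ, 1 ≤ r →
      (∫ ρ in Set.Ioc (0 : ℝ) r,
          (1 - ρ / r) ^ ((s - 1) * n / ((n : ℝ) - s)) *
            (ρ ^ (n - 1) / (1 + ρ ^ 2) ^ ((n : ℝ) / 2)))
        ≤ C * (1 + Real.log r) ∧
      (∫ ρ in Set.Ioi r,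
          (1 - r / ρ) ^ ((s - 1) * n / ((n : ℝ) - s)) *
            (ρ⁻¹ / (1 + ρ ^ 2) ^ ((n : ℝ) / 2)))
        ≤ C * r ^ (-(n : ℝ)) := by
  have hn2 : (2:ℝ) ≤ (n:ℝ) := by exact_mod_cast hn
  have hns : (0:ℝ) < (n:ℝ) - s := by linarith
  set α := (s - 1) * n / ((n : ℝ) - s) with hα
  have hα0 : α < 0 := div_neg_of_neg_of_pos (mul_neg_of_neg_of_pos (by linarith) (by linarith)) hns
  have hα1 : -1 < α := by
    rw [hα, lt_div_iff₀ hns]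
    nlinarith [mul_pos hs0 (show (0:ℝ) < (n:ℝ) - 1 by linarith)]
  refine ⟨hα1, ?_⟩
  have hα1' : (0:ℝ) < α + 1 := by linarith
  have h2pos : (0:ℝ) < (2:ℝ) ^ (-α) := Real.rpow_pos_of_pos (by norm_num) _
  set C1 : ℝ := (2:ℝ) ^ (-α) + 2 / (α + 1) with hC1
  set C2 : ℝ := (2:ℝ) ^ (-α) / (α + 1) + 2 ^ (-α) with hC2
  have hC1pos : 0 < C1 := by positivity
  have hC2pos : 0 < C2 := by positivity
  refine ⟨C1 + C2, by positivity, fun r hr => ⟨?_, ?_⟩⟩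
  · have h := bound1 hn hα1 hα0 hr
    have hlog : (0:ℝ) ≤ 1 + Real.log r := by
      have := Real.log_nonneg hr; linarith
    calc _ ≤ C1 * (1 + Real.log r) := h
      _ ≤ (C1 + C2) * (1 + Real.log r) := by nlinarith
  · have h := bound2 hn hα1 hα0 hr
    have hrp : (0:ℝ) < r ^ (-(n:ℝ)) := Real.rpow_pos_of_pos (by linarith) _
    calc _ ≤ C2 * r ^ (-(n:ℝ)) := h
      _ ≤ (C1 + C2) * r ^ (-(n:ℝ)) := by nlinarith
end

section
/- Let u : ℝ^n \ {0} → ℝ be measurable with f := e^{nu} ∈ L¹(ℝ^n), let v_u(x) = (1/γ) ∫ ln((1+|y|)/|x-y|) f(y) dy with γ > 0 and Λ = ∫ f. Let ū(x) = u(x/|x|²) - 2 ln|x|. Then v_{ū}(x) = v_u(x/|x|²) - (Λ/γ) ln|x| for all x ≠ 0. -/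
open MeasureTheory Real EuclideanGeometry

private lemma euclid_nontrivial {n : ℕ} (hn : 1 ≤ n) :
    Nontrivial (EuclideanSpace ℝ (Fin n)) := by
  refine nontrivial_of_ne (EuclideanSpace.single ⟨0, hn⟩ (1:ℝ)) 0 ?_
  intro h
  have := congrArg (fun v => v ⟨0, hn⟩) h
  simpa using this

private lemma inv_map_eq {n : ℕ} (y : EuclideanSpace ℝ (Fin n)) :
    inversion (0 : EuclideanSpace ℝ (Fin n)) 1 y = (‖y‖ ^ 2)⁻¹ • y := by
  simp [inversion_def, dist_eq_norm, inv_pow, div_pow]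

private lemma norm_inv_map {n : ℕ} (y : EuclideanSpace ℝ (Fin n)) (hy : y ≠ 0) :
    ‖(‖y‖ ^ 2)⁻¹ • y‖ = ‖y‖⁻¹ := by
  rw [norm_smul, Real.norm_eq_abs, abs_of_nonneg (by positivity)]
  have : ‖y‖ ≠ 0 := norm_ne_zero_iff.2 hy
  field_simp

private lemma cov_inversion {n : ℕ} (hn : 1 ≤ n) (g : EuclideanSpace ℝ (Fin n) → ℝ) :
    ∫ z, g z = ∫ y in ({0}ᶜ : Set (EuclideanSpace ℝ (Fin n))),
      ((‖y‖ ^ 2)⁻¹) ^ n * g ((‖y‖ ^ 2)⁻¹ • y) := by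
  haveI := euclid_nontrivial hn
  set s : Set (EuclideanSpace ℝ (Fin n)) := {0}ᶜ with hs_def
  have hs : MeasurableSet s := (measurableSet_singleton 0).compl
  set f : EuclideanSpace ℝ (Fin n) → EuclideanSpace ℝ (Fin n) := inversion 0 1 with hf_def
  have hfne : ∀ y : EuclideanSpace ℝ (Fin n), y ≠ 0 → f y ≠ 0 := by
    intro y hy h0
    have := dist_inversion_center (0:EuclideanSpace ℝ (Fin n)) y 1
    rw [← hf_def] at this
    rw [h0] at this
    simp only [dist_self, dist_eq_norm, sub_zero] at this
    exact absurd this.symm (div_ne_zero (pow_ne_zero 2 one_ne_zero) (norm_ne_zero_iff.2 hy))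
  have himage : f '' s = s := by
    apply Set.Subset.antisymm
    · rintro z ⟨y, hy, rfl⟩
      exact hfne y hy
    · intro z hz
      refine ⟨f z, hfne z hz, ?_⟩
      exact inversion_inversion (0:EuclideanSpace ℝ (Fin n)) one_ne_zero z
  have hinj : Set.InjOn f s := (inversion_injective (0:EuclideanSpace ℝ (Fin n)) one_ne_zero).injOn
  set f' : EuclideanSpace ℝ (Fin n) → EuclideanSpace ℝ (Fin n) →L[ℝ] EuclideanSpace ℝ (Fin n) := fun y =>
    (((1:ℝ) / dist y (0:EuclideanSpace ℝ (Fin n))) ^ 2) • ((ℝ ∙ (y - 0))ᗮ.reflection : EuclideanSpace ℝ (Fin n) →L[ℝ] EuclideanSpace ℝ (Fin n)) with hf'_def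
  have hderiv : ∀ y ∈ s, HasFDerivWithinAt f (f' y) s y := fun y hy =>
    (hasFDerivAt_inversion (c := (0:EuclideanSpace ℝ (Fin n))) (R := 1) hy).hasFDerivWithinAt
  have hdet : ∀ y : EuclideanSpace ℝ (Fin n), y ≠ 0 → |(f' y).det| = ((‖y‖ ^ 2)⁻¹) ^ n := by
    intro y hy
    have hyn : ‖y‖ ≠ 0 := norm_ne_zero_iff.2 hy
    rw [hf'_def]
    rw [ContinuousLinearMap.det, ContinuousLinearMap.coe_smul, LinearMap.det_smul]
    have h1 : (↑((ℝ ∙ (y - 0))ᗮ.reflection : EuclideanSpace ℝ (Fin n) →L[ℝ] EuclideanSpace ℝ (Fin n)) : EuclideanSpace ℝ (Fin n) →ₗ[ℝ] EuclideanSpace ℝ (Fin n))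
        = ((ℝ ∙ (y - 0))ᗮ.reflection).toLinearMap := rfl
    rw [h1, Submodule.det_reflection, Submodule.orthogonal_orthogonal, sub_zero,
      finrank_span_singleton hy, finrank_euclideanSpace_fin, dist_eq_norm, sub_zero, abs_mul]
    simp [abs_of_nonneg, pow_mul, div_pow, abs_of_nonneg (a := (1/‖y‖^2)^n) (by positivity),
      one_div, inv_pow]
  have h0 : ∫ z, g z = ∫ z in s, g z := by
    rw [← setIntegral_univ (f := g)]
    apply setIntegral_congr_set
    symm
    rw [MeasureTheory.ae_eq_univ]
    simp [hs_def]
  have h1 : ∫ z in s, g z = ∫ y in s, |(f' y).det| • g (f y) := by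
    conv_lhs => rw [← himage]
    exact integral_image_eq_integral_abs_det_fderiv_smul volume hs hderiv hinj g
  rw [h0, h1]
  apply setIntegral_congr_fun hs
  intro y hy
  have hy0 : y ≠ 0 := hy
  show |(f' y).det| • g (f y) = (‖y‖ ^ 2)⁻¹ ^ n * g ((‖y‖ ^ 2)⁻¹ • y)
  rw [hdet y hy0, smul_eq_mul]
  congr 1
  rw [hf_def, inv_map_eq y]

theorem stmt_17 {n : ℕ} (hn : 1 ≤ n) (γ Λ : ℝ) (hγ : 0 < γ)
    (u : EuclideanSpace ℝ (Fin n) → ℝ) (hm : Measurable u)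
    (hfint : Integrable (fun y : EuclideanSpace ℝ (Fin n) => Real.exp (n * u y)))
    (hΛ : ∫ y, Real.exp (n * u y) = Λ)
    (ub : EuclideanSpace ℝ (Fin n) → ℝ)
    (hub : ∀ x, ub x = u ((‖x‖ ^ 2)⁻¹ • x) - 2 * Real.log ‖x‖)
    (vu vub : EuclideanSpace ℝ (Fin n) → ℝ)
    (hvu : ∀ x, vu x = (1 / γ) * ∫ y, Real.log ((1 + ‖y‖) / ‖x - y‖) * Real.exp (n * u y))
    (hvub : ∀ x, vub x = (1 / γ) * ∫ y, Real.log ((1 + ‖y‖) / ‖x - y‖) * Real.exp (n * ub y))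
    (hint1 : ∀ x : EuclideanSpace ℝ (Fin n), x ≠ 0 →
      Integrable (fun y : EuclideanSpace ℝ (Fin n) =>
        Real.log ((1 + ‖y‖) / ‖x - y‖) * Real.exp (n * u y)))
    (hint2 : ∀ x : EuclideanSpace ℝ (Fin n), x ≠ 0 →
      Integrable (fun y : EuclideanSpace ℝ (Fin n) =>
        Real.log ((1 + ‖y‖) / ‖x - y‖) * Real.exp (n * ub y))) :
    ∀ x : EuclideanSpace ℝ (Fin n), x ≠ 0 →
      vub x = vu ((‖x‖ ^ 2)⁻¹ • x) - (Λ / γ) * Real.log ‖x‖ := by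
  intro x hx
  haveI := euclid_nontrivial hn
  have hxn : ‖x‖ ≠ 0 := norm_ne_zero_iff.2 hx
  set x' : EuclideanSpace ℝ (Fin n) := (‖x‖ ^ 2)⁻¹ • x with hx'_def
  have hx'0 : x' ≠ 0 := by
    intro h
    have := norm_inv_map x hx
    rw [← hx'_def, h] at this
    simp at this
    exact hxn this.symm
  set g : EuclideanSpace ℝ (Fin n) → ℝ := fun z =>
    (Real.log ((1 + ‖z‖) / ‖x' - z‖) - Real.log ‖x‖) * Real.exp (n * u z) with hg_def
  -- Step B : change of variables
  have hB : (∫ y, Real.log ((1 + ‖y‖) / ‖x - y‖) * Real.exp (n * ub y)) = ∫ z, g z := by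
    rw [cov_inversion hn g]
    have hs : MeasurableSet ({0}ᶜ : Set (EuclideanSpace ℝ (Fin n))) :=
      (measurableSet_singleton 0).compl
    have h0 : (∫ y, Real.log ((1 + ‖y‖) / ‖x - y‖) * Real.exp (n * ub y))
        = ∫ y in ({0}ᶜ : Set (EuclideanSpace ℝ (Fin n))),
            Real.log ((1 + ‖y‖) / ‖x - y‖) * Real.exp (n * ub y) := by
      rw [← setIntegral_univ]
      apply setIntegral_congr_set
      symm
      rw [MeasureTheory.ae_eq_univ]
      simp
    rw [h0]
    apply setIntegral_congr_ae hs
    have hax : ∀ᵐ (y : EuclideanSpace ℝ (Fin n)) ∂volume, y ≠ x := by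
      rw [ae_iff]
      simpa [Set.setOf_eq_eq_singleton, not_not] using measure_singleton (μ := volume) x
    filter_upwards [hax] with y hyx hymem
    have hy0 : y ≠ 0 := hymem
    have ha : (0:ℝ) < ‖y‖ := norm_pos_iff.2 hy0
    have han : ‖y‖ ≠ 0 := ne_of_gt ha
    have hb : (0:ℝ) < ‖x - y‖ := by
      rw [norm_pos_iff, sub_ne_zero]; exact fun h => hyx h.symm
    have hbn : ‖x - y‖ ≠ 0 := ne_of_gt hb
    -- exp identity
    have hexp : Real.exp (n * ub y)
        = Real.exp (n * u ((‖y‖ ^ 2)⁻¹ • y)) * ((‖y‖ ^ 2)⁻¹) ^ n := by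
      rw [hub y, mul_sub, Real.exp_sub]
      have h2 : (n:ℝ) * (2 * Real.log ‖y‖) = Real.log ((‖y‖ ^ 2) ^ n) := by
        rw [Real.log_pow, Real.log_pow]
        push_cast; ring
      rw [h2, Real.exp_log (by positivity), div_eq_mul_inv, inv_pow]
    -- distance identity
    have hdist : ‖x' - (‖y‖ ^ 2)⁻¹ • y‖ = ‖x - y‖ / (‖x‖ * ‖y‖) := by
      have := dist_inversion_inversion (c := (0:EuclideanSpace ℝ (Fin n)))
        (x := x) (y := y) hx hy0 1
      rw [inv_map_eq, inv_map_eq] at this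
      simp only [dist_eq_norm, sub_zero, one_pow, one_mul] at this
      rw [hx'_def, this]
      ring
    have hnormy : ‖(‖y‖ ^ 2)⁻¹ • y‖ = ‖y‖⁻¹ := norm_inv_map y hy0
    -- log identity
    have hlog : (1 + ‖y‖⁻¹) / (‖x - y‖ / (‖x‖ * ‖y‖))
        = ((1 + ‖y‖) / ‖x - y‖) * ‖x‖ := by
      field_simp
      ring
    have hlog2 : Real.log (((1 + ‖y‖) / ‖x - y‖) * ‖x‖)
        = Real.log ((1 + ‖y‖) / ‖x - y‖) + Real.log ‖x‖ :=
      Real.log_mul (by positivity) hxn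
    show Real.log ((1 + ‖y‖) / ‖x - y‖) * Real.exp (n * ub y)
        = ((‖y‖ ^ 2)⁻¹) ^ n * g ((‖y‖ ^ 2)⁻¹ • y)
    rw [hg_def, hexp]
    simp only [hnormy, hdist, hlog, hlog2]
    ring
  -- Step A : split the integral
  have hA : ∫ z, g z = (∫ z, Real.log ((1 + ‖z‖) / ‖x' - z‖) * Real.exp (n * u z))
      - Real.log ‖x‖ * Λ := by
    have hrw : g = fun z => Real.log ((1 + ‖z‖) / ‖x' - z‖) * Real.exp (n * u z)
        - Real.log ‖x‖ * Real.exp (n * u z) := funext fun z => by rw [hg_def]; ring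
    rw [hrw, integral_sub (hint1 x' hx'0) (hfint.const_mul _), integral_const_mul, hΛ]
  rw [hvub x, hB, hA, hvu x']
  ring
end
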